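/- Honest-verifier zero-knowledge of the Σ-protocol for correct VRF evaluation: for every challenge c ∈ ZMod q, the pushforward of uniform(ZMod q) under the honest prover map b ↦ (T^{b.val}, b + c·sk) equals the pushforward of uniform(ZMod q) under the simulator map z ↦ (T^{(z + c·x).val} · g_T^{−(c.val)}, z). In particular, simulated transcripts, computed without knowledge of the secret key sk, are distributed identically to honest transcripts. -/
import Mathlib

lemma uniform_map_equiv {α : Type*} [Fintype α] [Nonempty α] (e : α ≃ α) :
    (PMF.uniformOfFintype α).map e = PMF.uniformOfFintype α := by
  ext b
  rw [PMF.map_apply, tsum_eq_single (e.symm b) (fun a ha => by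
    rw [if_neg]
    intro h
    exact ha (by simpa using congrArg e.symm h.symm))]
  simp [PMF.uniformOfFintype_apply]

/-- Honest-verifier zero-knowledge of the Σ-protocol for correct VRF evaluation. -/
theorem vrf_sigma_hvzk
    {q : ℕ} [Fact q.Prime]
    {GT : Type*} [CommGroup GT] (hGT : ∀ y : GT, y ^ q = 1)
    (gT T : GT) (sk x : ZMod q)
    (hT : T ^ (sk + x).val = gT)
    (c : ZMod q) :
    (PMF.uniformOfFintype (ZMod q)).map
        (fun b => (T ^ b.val, b + c * sk))
      = (PMF.uniformOfFintype (ZMod q)).map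
        (fun z => (T ^ (z + c * x).val * gT ^ (-(c.val : ℤ)), z)) := by
  have key : ∀ a b : ℤ, ((a : ZMod q) = (b : ZMod q)) → T ^ a = T ^ b := by
    intro a b h
    obtain ⟨k, hk⟩ := (ZMod.intCast_zmod_eq_zero_iff_dvd (a - b) q).mp
      (by push_cast; rw [h]; ring)
    have : a = b + q * k := by linarith
    rw [this, zpow_add, zpow_mul, zpow_natCast, hGT, one_zpow, mul_one]
  have hmap := congrArg (PMF.map (fun z : ZMod q =>
      (T ^ (z + c * x).val * gT ^ (-(c.val : ℤ)), z)))
    (uniform_map_equiv (Equiv.addRight (c * sk)))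
  rw [PMF.map_comp] at hmap
  rw [← hmap]
  congr 1
  funext b
  simp only [Function.comp, Equiv.coe_addRight]
  refine Prod.ext ?_ rfl
  simp only
  rw [← hT]
  have hv : ∀ a : ZMod q, ((a.val : ℤ) : ZMod q) = a := by
    intro a; push_cast; simp [ZMod.natCast_val, ZMod.cast_id]
  calc T ^ b.val = T ^ ((b.val : ℤ)) := by rw [zpow_natCast]
    _ = T ^ ((((b + c * sk) + c * x).val : ℤ) + (-(c.val : ℤ)) * ((sk + x).val : ℤ)) := by
        apply key
        push_cast [ZMod.natCast_val, ZMod.cast_id]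
        ring
    _ = T ^ (((b + c * sk) + c * x).val) * (T ^ ((sk + x).val)) ^ (-(c.val : ℤ)) := by
        rw [zpow_add, zpow_natCast, mul_comm (-(c.val:ℤ)), zpow_mul, zpow_natCast]
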